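/- Let s, t > 1 be odd integers with gcd(s, t) = 1 and set n = s * t. Then the number of ordered pairs ((k, ℓ), (k', ℓ')) of elements of ZMod s × ZMod t with (k, ℓ) ≠ (k', ℓ') such that the graph D_{k,ℓ} ⊔ D_{k',ℓ'} contains a Hamiltonian path equals n * φ(n). (Thus the lower bound on the number of perfect pairs obtained from the product construction coincides with the bound n·φ(n)/2 obtained from the direct construction: the two lower bounds of Wagner are equivalent.) -/

import Mathlib

/-- For `s, t ≥ 1`, `k : ZMod s`, `ℓ : ZMod t`, the graph `D k ℓ` on vertex set
`ZMod s × ZMod t` in which distinct vertices `(i, j)` and `(i', j')` are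
adjacent iff `i + i' = k` and `j + j' = ℓ`. -/
def D (s t : ℕ) (k : ZMod s) (ℓ : ZMod t) : SimpleGraph (ZMod s × ZMod t) where
  Adj x y := x ≠ y ∧ x.1 + y.1 = k ∧ x.2 + y.2 = ℓ
  symm := ⟨fun x y ⟨h1, h2, h3⟩ =>
    ⟨h1.symm, by rwa [add_comm], by rwa [add_comm]⟩⟩
  loopless := ⟨fun x ⟨h, _⟩ => h rfl⟩

/-- A graph has a Hamiltonian path if some walk in it is a Hamiltonian path. -/
def HasHamiltonianPath {V : Type*} [DecidableEq V] (G : SimpleGraph V) : Prop :=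
  ∃ (a b : V) (p : G.Walk a b), p.IsHamiltonian

/-- The union of the two matching-like graphs, transported to a single cyclic group. -/
private def MG (n : ℕ) (a b : ZMod n) : SimpleGraph (ZMod n) where
  Adj x y := x ≠ y ∧ (x + y = a ∨ x + y = b)
  symm := by
    constructor
    rintro x y ⟨h1, h2⟩
    exact ⟨h1.symm, by rcases h2 with h | h <;> [left; right] <;> rwa [add_comm]⟩
  loopless := ⟨fun x ⟨h, _⟩ => h rfl⟩

private def eps (j : ℕ) : ℤ :=
  if j % 2 = 0 then -((j / 2 : ℕ) : ℤ) else ((j / 2 : ℕ) : ℤ) + 1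

private lemma eps_sum (j : ℕ) :
    eps j + eps (j + 1) = if j % 2 = 0 then 1 else 0 := by
  simp only [eps]; split_ifs <;> omega

private lemma eps_diff (j : ℕ) :
    eps (j + 1) - eps j = if j % 2 = 0 then ((j : ℤ) + 1) else -((j : ℤ) + 1) := by
  simp only [eps]; split_ifs <;> omega

/-- Build a walk along a sequence of pairwise-adjacent vertices. -/
private def walkFrom {V : Type*} (G : SimpleGraph V) (x : ℕ → V) (n : ℕ)
    (hadj : ∀ j, j + 1 ≤ n - 1 → G.Adj (x j) (x (j + 1))) :
    (len : ℕ) → (j : ℕ) → (j + len = n - 1) → G.Walk (x j) (x (n - 1))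
  | 0, j, h => (SimpleGraph.Walk.nil : G.Walk (x j) (x j)).copy rfl (by rw [← h]; rfl)
  | (len + 1), j, h =>
      SimpleGraph.Walk.cons (hadj j (by omega)) (walkFrom G x n hadj len (j + 1) (by omega))

private lemma walkFrom_support {V : Type*} (G : SimpleGraph V) (x : ℕ → V) (n : ℕ)
    (hadj : ∀ j, j + 1 ≤ n - 1 → G.Adj (x j) (x (j + 1))) :
    ∀ (len j : ℕ) (h : j + len = n - 1),
      (walkFrom G x n hadj len j h).support = (List.range' j (len + 1)).map x
  | 0, j, h => by
    simp only [walkFrom, SimpleGraph.Walk.support_copy, SimpleGraph.Walk.support_nil,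
      List.range']
    simp
  | (len + 1), j, h => by
    rw [walkFrom, SimpleGraph.Walk.support_cons,
      walkFrom_support G x n hadj len (j + 1) (by omega)]
    rfl

private lemma ham_of_unit (n : ℕ) (hn1 : 1 < n) (hodd : Odd n) (a b : ZMod n)
    (hd : IsUnit (b - a)) : HasHamiltonianPath (MG n a b) := by
  haveI : NeZero n := ⟨by omega⟩
  set d := b - a with hddef
  have h2 : IsUnit (2 : ZMod n) := by
    have := (ZMod.isUnit_iff_coprime 2 n).mpr hodd.coprime_two_left
    simpa using this
  set c : ZMod n := ↑h2.unit⁻¹ * a with hcdef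
  have h2c : 2 * c = a := by
    rw [hcdef, ← mul_assoc, h2.mul_val_inv, one_mul]
  set x : ℕ → ZMod n := fun j => c + ((eps j : ℤ) : ZMod n) * d with hxdef
  have key1 : ∀ j, x j + x (j + 1) = if j % 2 = 0 then b else a := by
    intro j
    have hsum : x j + x (j + 1) = 2 * c + ((eps j + eps (j + 1) : ℤ) : ZMod n) * d := by
      simp only [hxdef]; push_cast; ring
    rw [hsum, h2c, eps_sum j]
    split_ifs
    · push_cast; rw [hddef]; ring
    · push_cast; ring
  have key2 : ∀ j, j + 1 < n → x j ≠ x (j + 1) := by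
    intro j hj heq
    have h0 : ((eps (j + 1) - eps j : ℤ) : ZMod n) * d = 0 * d := by
      simp only [hxdef] at heq
      push_cast
      rw [zero_mul]
      linear_combination -heq
    have h0' : ((eps (j + 1) - eps j : ℤ) : ZMod n) = 0 := hd.mul_right_cancel h0
    have hdvd : (n : ℤ) ∣ ((j : ℤ) + 1) := by
      rw [eps_diff j] at h0'
      split_ifs at h0' with hpar
      · exact (ZMod.intCast_zmod_eq_zero_iff_dvd _ n).mp h0'
      · exact dvd_neg.mp ((ZMod.intCast_zmod_eq_zero_iff_dvd _ n).mp h0')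
    have hle : (n : ℤ) ≤ (j : ℤ) + 1 := Int.le_of_dvd (by positivity) hdvd
    omega
  have hadj : ∀ j, j + 1 ≤ n - 1 → (MG n a b).Adj (x j) (x (j + 1)) := by
    intro j hj
    refine ⟨key2 j (by omega), ?_⟩
    have := key1 j
    split_ifs at this
    · right; exact this
    · left; exact this
  let p := walkFrom (MG n a b) x n hadj (n - 1) 0 (by omega)
  have hsupp : p.support = (List.range n).map x := by
    have h1 : n - 1 + 1 = n := by omega
    rw [walkFrom_support, h1, List.range_eq_range']
  have surj : ∀ y : ZMod n, ∃ j, j < n ∧ x j = y := by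
    intro y
    obtain ⟨du, hdu⟩ := hd
    have hrep : ∀ e : ZMod n, ∃ j, j < n ∧ ((eps j : ℤ) : ZMod n) = e := by
      intro e
      set m := e.val with hm
      have hmn : m < n := ZMod.val_lt e
      have hme : (m : ZMod n) = e := by rw [hm, ZMod.natCast_val, ZMod.cast_id]
      rcases Nat.eq_zero_or_pos m with h0 | hpos
      · exact ⟨0, by omega, by simp [eps, ← hme, h0]⟩
      rcases lt_or_ge (2 * m) n with hlt | hge
      · refine ⟨2 * m - 1, by omega, ?_⟩
        have hodd' : (2 * m - 1) % 2 = 1 := by omega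
        have hdiv : (2 * m - 1) / 2 = m - 1 := by omega
        simp only [eps, hodd', hdiv]
        rw [if_neg (by omega)]
        rw [← hme]
        push_cast [Nat.cast_sub (by omega : 1 ≤ m)]
        ring
      · have hne : 2 * m ≠ n := by have := Nat.odd_iff.mp hodd; omega
        refine ⟨2 * (n - m), by omega, ?_⟩
        have heven : (2 * (n - m)) % 2 = 0 := by omega
        have hdiv : (2 * (n - m)) / 2 = n - m := by omega
        simp only [eps, heven, hdiv, if_pos rfl]
        rw [← hme]
        push_cast [Nat.cast_sub (by omega : m ≤ n)]
        rw [ZMod.natCast_self]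
        ring
    obtain ⟨j, hj, hje⟩ := hrep ((y - c) * ↑du⁻¹)
    refine ⟨j, hj, ?_⟩
    simp only [hxdef, hje, ← hdu]
    rw [mul_assoc, ← Units.val_mul, inv_mul_cancel, Units.val_one, mul_one]
    ring
  have hbij : Function.Bijective (fun j : Fin n => x j) := by
    rw [Fintype.bijective_iff_surjective_and_card]
    refine ⟨?_, by simp [ZMod.card]⟩
    intro y
    obtain ⟨j, hj, hxy⟩ := surj y
    exact ⟨⟨j, hj⟩, hxy⟩
  have hnodup : ((List.range n).map x).Nodup := by
    refine List.Nodup.map_on ?_ List.nodup_range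
    intro i hi j hj hxy
    have hi' := List.mem_range.mp hi
    have hj' := List.mem_range.mp hj
    have := hbij.injective (a₁ := ⟨i, hi'⟩) (a₂ := ⟨j, hj'⟩) hxy
    exact congrArg Fin.val this
  have hpath : p.IsPath := SimpleGraph.Walk.IsPath.mk' (by rw [hsupp]; exact hnodup)
  refine ⟨_, _, p, hpath.isHamiltonian_of_mem ?_⟩
  intro w
  rw [hsupp]
  obtain ⟨j, hj, rfl⟩ := surj w
  exact List.mem_map.mpr ⟨j, List.mem_range.mpr hj, rfl⟩

private lemma not_ham (n : ℕ) (hn1 : 1 < n) (hodd : Odd n) (a b : ZMod n)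
    (hd : ¬ IsUnit (b - a)) : ¬ HasHamiltonianPath (MG n a b) := by
  haveI : NeZero n := ⟨by omega⟩
  rintro ⟨u, v, p, hp⟩
  have h2 : IsUnit (2 : ZMod n) := by
    have := (ZMod.isUnit_iff_coprime 2 n).mpr hodd.coprime_two_left
    simpa using this
  set c : ZMod n := ↑h2.unit⁻¹ * a with hcdef
  have h2c : 2 * c = a := by
    rw [hcdef, ← mul_assoc, h2.mul_val_inv, one_mul]
  set H := AddSubgroup.zmultiples (b - a) with hHdef
  have hne : H ≠ ⊤ := by
    intro htop
    have h1 : (1 : ZMod n) ∈ H := htop ▸ AddSubgroup.mem_top 1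
    obtain ⟨k, hk⟩ := AddSubgroup.mem_zmultiples_iff.mp h1
    refine hd (IsUnit.of_mul_eq_one ((k : ℤ) : ZMod n) ?_)
    rw [mul_comm, ← zsmul_eq_mul]
    exact_mod_cast hk
  obtain ⟨z, hz⟩ : ∃ z, z ∉ H := by
    by_contra hall
    push_neg at hall
    exact hne ((AddSubgroup.eq_top_iff' H).mpr hall)
  have step : ∀ {x y : ZMod n}, (MG n a b).Adj x y → x - c ∈ H → y - c ∈ H := by
    rintro x y ⟨-, h | h⟩ hx
    · have hy : y - c = -(x - c) := by
        have : y = a - x := eq_sub_of_add_eq' h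
        rw [this, ← h2c]; ring
      rw [hy]; exact neg_mem hx
    · have hy : y - c = (b - a) + -(x - c) := by
        have : y = b - x := eq_sub_of_add_eq' h
        rw [this, ← h2c]; ring
      rw [hy]
      exact add_mem (AddSubgroup.mem_zmultiples _) (neg_mem hx)
  have walkP : ∀ {x y : ZMod n} (q : (MG n a b).Walk x y), x - c ∈ H → y - c ∈ H := by
    intro x y q
    induction q with
    | nil => exact id
    | cons h q ih => exact fun hx => ih (step h hx)
  have hc : c ∈ p.support := hp.mem_support c
  have hw : c + z ∈ p.support := hp.mem_support _
  have h1 : u - c ∈ H := walkP (p.takeUntil c hc).reverse (by simpa using zero_mem H)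
  have h2' : (c + z) - c ∈ H := walkP (p.takeUntil _ hw) h1
  rw [add_sub_cancel_left] at h2'
  exact hz h2'

private lemma ham_map {V W : Type*} [DecidableEq V] [DecidableEq W]
    {G : SimpleGraph V} {H : SimpleGraph W} (e : V ≃ W)
    (he : ∀ x y, G.Adj x y ↔ H.Adj (e x) (e y)) :
    HasHamiltonianPath G → HasHamiltonianPath H := by
  rintro ⟨p1, p2, p, hp⟩
  let f : G →g H := ⟨e, fun {x y} h => (he x y).mp h⟩
  exact ⟨e p1, e p2, p.map f, hp.map f e.bijective⟩

private lemma ham_iff (n : ℕ) (hn1 : 1 < n) (hodd : Odd n) (a b : ZMod n) :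
    (a ≠ b ∧ HasHamiltonianPath (MG n a b)) ↔ IsUnit (b - a) := by
  constructor
  · rintro ⟨-, hham⟩
    by_contra h
    exact not_ham n hn1 hodd a b h hham
  · intro h
    haveI : Fact (1 < n) := ⟨hn1⟩
    refine ⟨?_, ham_of_unit n hn1 hodd a b h⟩
    intro heq
    rw [heq, sub_self] at h
    exact not_isUnit_zero h

theorem stmt_15 (s t : ℕ) (hs : 1 < s) (ht : 1 < t)
    (hsodd : Odd s) (htodd : Odd t) (hco : Nat.Coprime s t)
    (n : ℕ) (hn : n = s * t) :
    Nat.card {q : (ZMod s × ZMod t) × (ZMod s × ZMod t) //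
        q.1 ≠ q.2 ∧ HasHamiltonianPath (D s t q.1.1 q.1.2 ⊔ D s t q.2.1 q.2.2)} =
      n * Nat.totient n := by
  subst hn
  have hn1 : 1 < s * t := by calc 1 < s := hs
                                 _ ≤ s * t := Nat.le_mul_of_pos_right s (by omega)
  haveI : NeZero (s * t) := ⟨by omega⟩
  have hodd : Odd (s * t) := hsodd.mul htodd
  let e : ZMod (s * t) ≃+* ZMod s × ZMod t := ZMod.chineseRemainder hco
  have key : ∀ q : (ZMod s × ZMod t) × (ZMod s × ZMod t),
      (q.1 ≠ q.2 ∧ HasHamiltonianPath (D s t q.1.1 q.1.2 ⊔ D s t q.2.1 q.2.2)) ↔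
        IsUnit (e.symm q.2 - e.symm q.1) := by
    intro q
    rw [← ham_iff (s * t) hn1 hodd (e.symm q.1) (e.symm q.2)]
    have hadj : ∀ x y : ZMod (s * t),
        (MG (s * t) (e.symm q.1) (e.symm q.2)).Adj x y ↔
          (D s t q.1.1 q.1.2 ⊔ D s t q.2.1 q.2.2).Adj (e x) (e y) := by
      intro x y
      have hsum : ∀ w : ZMod s × ZMod t,
          ((e x).1 + (e y).1 = w.1 ∧ (e x).2 + (e y).2 = w.2) ↔ x + y = e.symm w := by
        intro w
        have hE : e (x + y) = e x + e y := map_add e x y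
        constructor
        · rintro ⟨h1', h2'⟩
          have hw : e (x + y) = w := by rw [hE]; exact Prod.ext h1' h2'
          rw [← hw, RingEquiv.symm_apply_apply]
        · intro hxy
          have hw : e x + e y = w := by rw [← hE, hxy, RingEquiv.apply_symm_apply]
          rw [← hw]
          exact ⟨rfl, rfl⟩
      show (x ≠ y ∧ _) ↔ _
      rw [SimpleGraph.sup_adj]
      show _ ↔ (e x ≠ e y ∧ _ ∧ _) ∨ (e x ≠ e y ∧ _ ∧ _)
      rw [e.injective.ne_iff]
      have h1 := hsum q.1
      have h2 := hsum q.2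
      tauto
    constructor
    · rintro ⟨hne, hham⟩
      refine ⟨fun hcon => hne ?_, ?_⟩
      · have := congrArg e hcon
        rwa [RingEquiv.apply_symm_apply, RingEquiv.apply_symm_apply] at this
      · refine ham_map e.toEquiv.symm (fun x y => ?_) hham
        have h := hadj (e.symm x) (e.symm y)
        simp only [RingEquiv.apply_symm_apply] at h
        exact h.symm
    · rintro ⟨hne, hham⟩
      exact ⟨fun hcon => hne (by rw [hcon]), ham_map e.toEquiv hadj hham⟩
  have hcongr := Nat.card_congr (Equiv.subtypeEquivRight key)
  rw [hcongr]
  let E2 : {q : (ZMod s × ZMod t) × (ZMod s × ZMod t) //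
      IsUnit (e.symm q.2 - e.symm q.1)} ≃ (ZMod s × ZMod t) × (ZMod (s * t))ˣ :=
    { toFun := fun q => (q.1.1, q.2.unit)
      invFun := fun pu => ⟨(pu.1, e (e.symm pu.1 + ↑pu.2)), by
        simp [RingEquiv.symm_apply_apply]⟩
      left_inv := fun q => by
        refine Subtype.ext (Prod.ext rfl ?_)
        show e (e.symm q.1.1 + ↑q.2.unit) = q.1.2
        rw [IsUnit.unit_spec]
        have : e.symm q.1.1 + (e.symm q.1.2 - e.symm q.1.1) = e.symm q.1.2 := by ring
        rw [this, RingEquiv.apply_symm_apply]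
      right_inv := fun pu => by
        refine Prod.ext rfl (Units.ext ?_)
        simp [IsUnit.unit_spec] }
  rw [Nat.card_congr E2, Nat.card_prod]
  have hc1 : Nat.card (ZMod s × ZMod t) = s * t := by
    haveI : NeZero s := ⟨by omega⟩
    haveI : NeZero t := ⟨by omega⟩
    rw [Nat.card_prod, Nat.card_eq_fintype_card, Nat.card_eq_fintype_card, ZMod.card, ZMod.card]
  have hc2 : Nat.card (ZMod (s * t))ˣ = Nat.totient (s * t) := by
    rw [Nat.card_eq_fintype_card, ZMod.card_units_eq_totient]
  rw [hc1, hc2]
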